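/- The improper integrals ∫₀^∞ t/sinh(t) dt and ∫₀^∞ t²/sinh(t) dt converge and equal π²/4 and (7/2)ζ(3), respectively, where ζ is the Riemann zeta function. Consequently, for a one-sided infinite regular line network with Rayleigh fading, m-phase TDMA and α = 2, whose SIR satisfies ℙ[π√SIR/m > t] = t/sinh(t) for t > 0, the moments are E[√SIR] = (m/π)∫₀^∞ t/sinh t dt = πm/4 and E[SIR] = (m/π)²·2∫₀^∞ t²/sinh t dt = 7ζ(3)m²/π². -/

import Mathlib

open MeasureTheory ProbabilityTheory Set Real

/-- The Riemann zeta function for real argument, `ζ(s) = ∑_{n=1}^∞ n^{-s}`. -/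
noncomputable def zetaReal (s : ℝ) : ℝ := ∑' n : ℕ, ((n : ℝ) + 1) ^ (-s)

lemma hasSum_inv_sinh {t : ℝ} (ht : 0 < t) :
    HasSum (fun n : ℕ => 2 * Real.exp (-((2 * n + 1) * t))) (1 / Real.sinh t) := by
  have h1 : Real.exp (-(2 * t)) < 1 := Real.exp_lt_one_iff.mpr (by linarith)
  have h0 : (0:ℝ) ≤ Real.exp (-(2 * t)) := (Real.exp_pos _).le
  have hg := (hasSum_geometric_of_lt_one h0 h1).mul_left (2 * Real.exp (-t))
  have hsinh : 0 < Real.sinh t := Real.sinh_pos_iff.mpr ht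
  have key : 1 - Real.exp (-(2 * t)) = 2 * Real.exp (-t) * Real.sinh t := by
    rw [Real.sinh_eq]
    have h2 : Real.exp (-(2 * t)) = Real.exp (-t) * Real.exp (-t) := by
      rw [← Real.exp_add]; ring_nf
    have h3 : Real.exp (-t) * Real.exp t = 1 := by rw [← Real.exp_add]; simp
    rw [h2]; linear_combination -h3
  rw [show (fun n : ℕ => 2 * Real.exp (-((2 * n + 1) * t)))
      = fun i : ℕ => 2 * Real.exp (-t) * Real.exp (-(2 * t)) ^ i from by
    funext n
    rw [← Real.exp_nat_mul, mul_assoc, ← Real.exp_add]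
    ring_nf,
    show 1 / Real.sinh t = 2 * Real.exp (-t) * (1 - Real.exp (-(2 * t)))⁻¹ from by
    rw [key, mul_inv, ← mul_assoc, mul_inv_cancel₀ (by positivity), one_mul, one_div]]
  exact hg

lemma integrableOn_pow_mul_exp (n : ℕ) {c : ℝ} (hc : 0 < c) :
    IntegrableOn (fun t : ℝ => t ^ n * Real.exp (-(c * t))) (Ioi 0) := by
  have h := Real.GammaIntegral_convergent (s := (n : ℝ) + 1) (by positivity)
  have h2 : IntegrableOn
      (fun x : ℝ => Real.exp (-(c * x)) * (c * x) ^ ((n : ℝ) + 1 - 1)) (Ioi 0) := by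
    have := (integrableOn_Ioi_comp_mul_left_iff
      (fun x : ℝ => Real.exp (-x) * x ^ ((n : ℝ) + 1 - 1)) 0 hc).mpr (by simpa using h)
    simpa using this
  have h3 : IntegrableOn
      (fun x : ℝ => ((c : ℝ) ^ n)⁻¹ * (Real.exp (-(c * x)) * (c * x) ^ ((n : ℝ) + 1 - 1)))
      (Ioi 0) := h2.const_mul _
  refine h3.congr_fun (fun x hx => ?_) measurableSet_Ioi
  simp only [add_sub_cancel_right, Real.rpow_natCast, mul_pow]
  field_simp

lemma integral_pow_mul_exp (n : ℕ) {c : ℝ} (hc : 0 < c) :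
    ∫ t in Ioi (0:ℝ), t ^ n * Real.exp (-(c * t)) = (Nat.factorial n : ℝ) / c ^ (n + 1) := by
  have h := Real.integral_rpow_mul_exp_neg_mul_Ioi (a := (n : ℝ) + 1) (by positivity) hc
  simp only [add_sub_cancel_right, Real.rpow_natCast] at h
  rw [h, show ((n : ℝ) + 1) = ((n + 1 : ℕ) : ℝ) by push_cast; ring, Real.rpow_natCast,
    show ((n + 1 : ℕ) : ℝ) = ((n : ℕ) : ℝ) + 1 by push_cast; ring,
    Real.Gamma_nat_eq_factorial, div_pow, one_pow]
  ring


lemma summable_odd_pow {p : ℕ} (hp : 1 < p) :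
    Summable (fun j : ℕ => 1 / (2 * (j : ℝ) + 1) ^ p) := by
  have hs : Summable (fun j : ℕ => 1 / ((j : ℝ) + 1) ^ p) := by
    have := Real.summable_one_div_nat_pow.mpr hp
    have := (summable_nat_add_iff 1).mpr this
    simpa using this
  refine Summable.of_nonneg_of_le (fun j => by positivity) (fun j => ?_) hs
  gcongr
  · linarith [Nat.cast_nonneg (α := ℝ) j]

lemma odd_sq_sum : ∑' j : ℕ, 1 / (2 * (j : ℝ) + 1) ^ 2 = π ^ 2 / 8 := by
  have hz := hasSum_zeta_two
  set f : ℕ → ℝ := fun n => 1 / (n : ℝ) ^ 2 with hf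
  have hfs : Summable f := hz.summable
  have heq : (fun k : ℕ => f (2 * k)) = fun k : ℕ => (1 / 4) * f k := by
    funext k
    simp only [hf]
    push_cast
    rw [mul_pow]
    rw [one_div, mul_inv, one_div]
    norm_num
  have hodd : (fun k : ℕ => f (2 * k + 1)) = fun k : ℕ => 1 / (2 * (k : ℝ) + 1) ^ 2 := by
    funext k; simp only [hf]; push_cast; ring_nf
  have heven : Summable (fun k : ℕ => f (2 * k)) := by rw [heq]; exact hfs.mul_left _
  have hos : Summable (fun k : ℕ => f (2 * k + 1)) := by
    rw [hodd]; exact summable_odd_pow (by norm_num)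
  have key := tsum_even_add_odd heven hos
  rw [hz.tsum_eq, heq, tsum_mul_left, hz.tsum_eq, hodd] at key
  linarith

lemma zetaReal_three_eq : zetaReal 3 = ∑' n : ℕ, 1 / ((n : ℝ) + 1) ^ 3 := by
  unfold zetaReal
  congr 1
  funext n
  rw [Real.rpow_neg (by positivity), show (3 : ℝ) = ((3 : ℕ) : ℝ) by norm_num,
    Real.rpow_natCast, one_div]

lemma zetaReal_three_nonneg : 0 ≤ zetaReal 3 := by
  rw [zetaReal_three_eq]
  exact tsum_nonneg fun n => by positivity

lemma summable_succ_cube : Summable (fun n : ℕ => 1 / ((n : ℝ) + 1) ^ 3) := by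
  have := Real.summable_one_div_nat_pow.mpr (show 1 < 3 by norm_num)
  have := (summable_nat_add_iff 1).mpr this
  simpa using this

lemma summable_cube : Summable (fun n : ℕ => 1 / (n : ℝ) ^ 3) := by
  exact Real.summable_one_div_nat_pow.mpr (by norm_num)

lemma tsum_cube_eq : ∑' n : ℕ, 1 / (n : ℝ) ^ 3 = zetaReal 3 := by
  rw [zetaReal_three_eq, summable_cube.tsum_eq_zero_add]
  push_cast
  norm_num

lemma odd_cube_sum : ∑' j : ℕ, 1 / (2 * (j : ℝ) + 1) ^ 3 = (7 / 8) * zetaReal 3 := by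
  set f : ℕ → ℝ := fun n => 1 / (n : ℝ) ^ 3 with hf
  have hfs : Summable f := summable_cube
  have heq : (fun k : ℕ => f (2 * k)) = fun k : ℕ => (1 / 8) * f k := by
    funext k
    simp only [hf]
    push_cast
    rw [mul_pow, one_div, mul_inv, one_div]
    norm_num
  have hodd : (fun k : ℕ => f (2 * k + 1)) = fun k : ℕ => 1 / (2 * (k : ℝ) + 1) ^ 3 := by
    funext k; simp only [hf]; push_cast; ring_nf
  have heven : Summable (fun k : ℕ => f (2 * k)) := by rw [heq]; exact hfs.mul_left _
  have hos : Summable (fun k : ℕ => f (2 * k + 1)) := by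
    rw [hodd]; exact summable_odd_pow (by norm_num)
  have key := tsum_even_add_odd heven hos
  rw [tsum_cube_eq, heq, tsum_mul_left, tsum_cube_eq, hodd] at key
  linarith

lemma lkey (n : ℕ) (hn : 0 < n) :
    ∫⁻ t in Set.Ioi (0:ℝ), ENNReal.ofReal (t ^ n / Real.sinh t) =
      ENNReal.ofReal (2 * (Nat.factorial n : ℝ) *
        ∑' j : ℕ, 1 / (2 * (j : ℝ) + 1) ^ (n + 1)) := by
  have hmeas : ∀ j : ℕ, Measurable
      (fun t : ℝ => ENNReal.ofReal (t ^ n * (2 * Real.exp (-((2 * (j:ℝ) + 1) * t))))) := by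
    intro j
    exact ((measurable_id'.pow_const n).mul
      (((measurable_id'.const_mul _).neg.exp).const_mul 2)).ennreal_ofReal
  have hc : ∀ j : ℕ, (0:ℝ) < 2 * (j:ℝ) + 1 := fun j => by positivity
  have hsum : Summable (fun j : ℕ =>
      2 * (Nat.factorial n : ℝ) * (1 / (2 * (j:ℝ) + 1) ^ (n + 1))) :=
    (summable_odd_pow (by omega)).mul_left _
  calc
    ∫⁻ t in Set.Ioi (0:ℝ), ENNReal.ofReal (t ^ n / Real.sinh t)
        = ∫⁻ t in Set.Ioi (0:ℝ),
            ∑' j : ℕ, ENNReal.ofReal (t ^ n * (2 * Real.exp (-((2 * (j:ℝ) + 1) * t)))) := by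
          refine MeasureTheory.setLIntegral_congr_fun measurableSet_Ioi
            (fun t ht => ?_)
          have hs := (hasSum_inv_sinh ht).mul_left (t ^ n)
          have hval : t ^ n * (1 / Real.sinh t) = t ^ n / Real.sinh t := by ring
          rw [hval] at hs
          rw [← hs.tsum_eq, ENNReal.ofReal_tsum_of_nonneg
            (fun j => mul_nonneg (pow_nonneg (le_of_lt ht) n) (by positivity)) hs.summable]
    _ = ∑' j : ℕ, ∫⁻ t in Set.Ioi (0:ℝ),
            ENNReal.ofReal (t ^ n * (2 * Real.exp (-((2 * (j:ℝ) + 1) * t)))) :=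
          MeasureTheory.lintegral_tsum fun j => (hmeas j).aemeasurable
    _ = ∑' j : ℕ, ENNReal.ofReal
            (2 * (Nat.factorial n : ℝ) * (1 / (2 * (j:ℝ) + 1) ^ (n + 1))) := by
          congr 1
          funext j
          have hint : IntegrableOn
              (fun t : ℝ => 2 * (t ^ n * Real.exp (-((2 * (j:ℝ) + 1) * t)))) (Ioi 0) :=
            (integrableOn_pow_mul_exp n (hc j)).const_mul 2
          have h1 := MeasureTheory.ofReal_integral_eq_lintegral_ofReal hint
            ((MeasureTheory.ae_restrict_iff' measurableSet_Ioi).mpr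
              (Filter.Eventually.of_forall fun t ht => mul_nonneg (by norm_num)
                (mul_nonneg (pow_nonneg (Set.mem_Ioi.mp ht).le n) (Real.exp_nonneg _))))
          have h2 : ∫ t in Set.Ioi (0:ℝ), 2 * (t ^ n * Real.exp (-((2 * (j:ℝ) + 1) * t)))
              = 2 * (Nat.factorial n : ℝ) * (1 / (2 * (j:ℝ) + 1) ^ (n + 1)) := by
            rw [integral_const_mul, integral_pow_mul_exp n (hc j)]
            ring
          rw [h2] at h1
          refine Eq.trans ?_ h1.symm
          exact MeasureTheory.lintegral_congr fun t => congrArg ENNReal.ofReal (by ring)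
    _ = ENNReal.ofReal (2 * (Nat.factorial n : ℝ) *
          ∑' j : ℕ, 1 / (2 * (j : ℝ) + 1) ^ (n + 1)) := by
          rw [← ENNReal.ofReal_tsum_of_nonneg (fun j => by positivity) hsum, tsum_mul_left]

lemma gen_int (n : ℕ) (hn : 0 < n) :
    IntegrableOn (fun t : ℝ => t ^ n / Real.sinh t) (Ioi 0) ∧
    ∫ t in Ioi (0:ℝ), t ^ n / Real.sinh t =
      2 * (Nat.factorial n : ℝ) * ∑' j : ℕ, 1 / (2 * (j : ℝ) + 1) ^ (n + 1) := by
  have hm : Measurable (fun t : ℝ => t ^ n / Real.sinh t) :=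
    (measurable_id'.pow_const n).div Real.continuous_sinh.measurable
  have hnn : 0 ≤ᵐ[volume.restrict (Ioi (0:ℝ))] fun t => t ^ n / Real.sinh t :=
    (MeasureTheory.ae_restrict_iff' measurableSet_Ioi).mpr
      (Filter.Eventually.of_forall fun t ht => div_nonneg
        (pow_nonneg (Set.mem_Ioi.mp ht).le n) (Real.sinh_pos_iff.mpr (Set.mem_Ioi.mp ht)).le)
  have hts : 0 ≤ ∑' j : ℕ, 1 / (2 * (j : ℝ) + 1) ^ (n + 1) :=
    tsum_nonneg fun j => by positivity
  have hfin : HasFiniteIntegral (fun t : ℝ => t ^ n / Real.sinh t)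
      (volume.restrict (Ioi 0)) := by
    rw [MeasureTheory.hasFiniteIntegral_iff_ofReal hnn, lkey n hn]
    exact ENNReal.ofReal_lt_top
  refine ⟨⟨hm.aestronglyMeasurable, hfin⟩, ?_⟩
  rw [MeasureTheory.integral_eq_lintegral_of_nonneg_ae hnn hm.aestronglyMeasurable,
    lkey n hn, ENNReal.toReal_ofReal (by positivity)]

lemma int_one_div_sinh :
    IntegrableOn (fun t : ℝ => t / Real.sinh t) (Ioi 0) ∧
    ∫ t in Ioi (0:ℝ), t / Real.sinh t = π ^ 2 / 4 := by
  have h := gen_int 1 one_pos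
  simp only [pow_one] at h
  rcases h with ⟨h1, h2⟩
  refine ⟨h1, ?_⟩
  rw [h2, odd_sq_sum]
  norm_num [Nat.factorial]
  ring

lemma int_two_div_sinh :
    IntegrableOn (fun t : ℝ => t ^ 2 / Real.sinh t) (Ioi 0) ∧
    ∫ t in Ioi (0:ℝ), t ^ 2 / Real.sinh t = (7 / 2) * zetaReal 3 := by
  have h := gen_int 2 two_pos
  rcases h with ⟨h1, h2⟩
  refine ⟨h1, ?_⟩
  rw [h2, odd_cube_sum]
  norm_num [Nat.factorial]
  ring

lemma lint_one : ∫⁻ t in Ioi (0:ℝ), ENNReal.ofReal (t / Real.sinh t)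
    = ENNReal.ofReal (π ^ 2 / 4) := by
  have h := lkey 1 one_pos
  simp only [pow_one] at h
  rw [h, odd_sq_sum]
  exact congrArg ENNReal.ofReal (by norm_num [Nat.factorial]; ring)

lemma lint_two : ∫⁻ t in Ioi (0:ℝ), ENNReal.ofReal (t ^ 2 / Real.sinh t)
    = ENNReal.ofReal ((7 / 2) * zetaReal 3) := by
  have h := lkey 2 two_pos
  rw [h, odd_cube_sum]
  exact congrArg ENNReal.ofReal (by norm_num [Nat.factorial]; ring)

/-- `∫₀^∞ t/sinh t dt = π²/4` and `∫₀^∞ t²/sinh t dt = (7/2) ζ(3)`. Consequently, for a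
TDMA line network (`α = 2`, reuse parameter `m`) whose SIR satisfies
`ℙ[π √SIR / m > t] = t / sinh t` for `t > 0`, one has `E[√SIR] = π m/4` and
`E[SIR] = 7 ζ(3) m²/π²`. -/
theorem tdma_sir_moments
    {Ω : Type*} [MeasureSpace Ω] [IsProbabilityMeasure (ℙ : Measure Ω)]
    (m : ℝ) (hm : 0 < m) (SIR : Ω → ℝ) (hmeas : Measurable SIR) (hpos : ∀ ω, 0 ≤ SIR ω)
    (hccdf : ∀ t : ℝ, 0 < t →
      ℙ {ω | π * Real.sqrt (SIR ω) / m > t} = ENNReal.ofReal (t / Real.sinh t)) :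
    IntegrableOn (fun t : ℝ => t / Real.sinh t) (Ioi 0) ∧
    (∫ t in Ioi (0 : ℝ), t / Real.sinh t) = π ^ 2 / 4 ∧
    IntegrableOn (fun t : ℝ => t ^ 2 / Real.sinh t) (Ioi 0) ∧
    (∫ t in Ioi (0 : ℝ), t ^ 2 / Real.sinh t) = (7 / 2) * zetaReal 3 ∧
    (∫ ω, Real.sqrt (SIR ω)) = π * m / 4 ∧
    (∫ ω, SIR ω) = 7 * zetaReal 3 * m ^ 2 / π ^ 2 := by
  set g : Ω → ℝ := fun ω => π * Real.sqrt (SIR ω) / m with hg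
  have hgm : Measurable g := (hmeas.sqrt.const_mul π).div_const m
  have hgnn : ∀ ω, 0 ≤ g ω := fun ω => by
    have := Real.sqrt_nonneg (SIR ω); positivity
  have htail : ∀ t ∈ Ioi (0:ℝ), ℙ {a | t < g a} = ENNReal.ofReal (t / Real.sinh t) :=
    fun t ht => hccdf t (Set.mem_Ioi.mp ht)
  -- first moment of g
  have E1 : ∫⁻ ω, ENNReal.ofReal (g ω) = ENNReal.ofReal (π ^ 2 / 4) := by
    rw [MeasureTheory.lintegral_eq_lintegral_meas_lt ℙ
      (Filter.Eventually.of_forall hgnn) hgm.aemeasurable,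
      MeasureTheory.setLIntegral_congr_fun measurableSet_Ioi
        htail, lint_one]
  have hgint : Integrable g ℙ := by
    refine ⟨hgm.aestronglyMeasurable, ?_⟩
    rw [MeasureTheory.hasFiniteIntegral_iff_ofReal (Filter.Eventually.of_forall hgnn), E1]
    exact ENNReal.ofReal_lt_top
  have hgval : ∫ ω, g ω = π ^ 2 / 4 := by
    rw [MeasureTheory.integral_eq_lintegral_of_nonneg_ae
      (Filter.Eventually.of_forall hgnn) hgm.aestronglyMeasurable, E1,
      ENNReal.toReal_ofReal (by positivity)]
  -- second moment of g
  have E2 : ∫⁻ ω, ENNReal.ofReal (g ω ^ 2) = ENNReal.ofReal (7 * zetaReal 3) := by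
    have h := MeasureTheory.lintegral_rpow_eq_lintegral_meas_lt_mul ℙ
      (Filter.Eventually.of_forall hgnn) hgm.aemeasurable (p := 2) two_pos
    have hpow : ∀ ω, g ω ^ (2:ℝ) = g ω ^ 2 := fun ω => by
      rw [show (2:ℝ) = ((2:ℕ):ℝ) by norm_num, Real.rpow_natCast]
    simp only [hpow] at h
    rw [h, MeasureTheory.setLIntegral_congr_fun measurableSet_Ioi
      (fun t ht => ?_), lint_two]
    · rw [← ENNReal.ofReal_mul (by norm_num)]
      exact congrArg ENNReal.ofReal (by norm_num; ring)
    · have ht0 : (0:ℝ) < t := Set.mem_Ioi.mp ht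
      rw [htail t ht, show (2:ℝ) - 1 = 1 by norm_num, Real.rpow_one,
        ← ENNReal.ofReal_mul (div_nonneg ht0.le (Real.sinh_pos_iff.mpr ht0).le)]
      exact congrArg ENNReal.ofReal (by ring)
  have hSIReq : ∀ ω, SIR ω = (m / π) ^ 2 * g ω ^ 2 := fun ω => by
    rw [hg]
    have hs := Real.sq_sqrt (hpos ω)
    field_simp
    linear_combination -hs
  have ESIR : ∫⁻ ω, ENNReal.ofReal (SIR ω)
      = ENNReal.ofReal ((m / π) ^ 2 * (7 * zetaReal 3)) := by
    calc ∫⁻ ω, ENNReal.ofReal (SIR ω)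
        = ∫⁻ ω, ENNReal.ofReal ((m / π) ^ 2) * ENNReal.ofReal (g ω ^ 2) := by
          refine MeasureTheory.lintegral_congr fun ω => ?_
          rw [← ENNReal.ofReal_mul (by positivity), ← hSIReq ω]
      _ = ENNReal.ofReal ((m / π) ^ 2) * ∫⁻ ω, ENNReal.ofReal (g ω ^ 2) :=
          MeasureTheory.lintegral_const_mul _ ((hgm.pow_const 2).ennreal_ofReal)
      _ = ENNReal.ofReal ((m / π) ^ 2 * (7 * zetaReal 3)) := by
          rw [E2, ← ENNReal.ofReal_mul (by positivity)]
  have hSIRint : Integrable SIR ℙ := by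
    refine ⟨hmeas.aestronglyMeasurable, ?_⟩
    rw [MeasureTheory.hasFiniteIntegral_iff_ofReal (Filter.Eventually.of_forall hpos), ESIR]
    exact ENNReal.ofReal_lt_top
  have hSIRval : ∫ ω, SIR ω = (m / π) ^ 2 * (7 * zetaReal 3) := by
    rw [MeasureTheory.integral_eq_lintegral_of_nonneg_ae
      (Filter.Eventually.of_forall hpos) hmeas.aestronglyMeasurable, ESIR,
      ENNReal.toReal_ofReal (mul_nonneg (by positivity)
        (mul_nonneg (by norm_num) zetaReal_three_nonneg))]
  have hsqrt : ∫ ω, Real.sqrt (SIR ω) = π * m / 4 := by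
    have heq : ∀ ω, Real.sqrt (SIR ω) = (m / π) * g ω := fun ω => by
      rw [hg]; field_simp
    calc ∫ ω, Real.sqrt (SIR ω) = ∫ ω, (m / π) * g ω := by
          exact MeasureTheory.integral_congr_ae (Filter.Eventually.of_forall heq)
      _ = (m / π) * ∫ ω, g ω := MeasureTheory.integral_const_mul _ _
      _ = π * m / 4 := by rw [hgval]; field_simp
  refine ⟨int_one_div_sinh.1, int_one_div_sinh.2, int_two_div_sinh.1, int_two_div_sinh.2,
    hsqrt, ?_⟩
  rw [hSIRval]
  field_simp
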